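/- Let F : ℂ^n → ℂ^n be a polynomial map of the form F = Id + H, i.e., F_i = X_i + H_i(X_1,…,X_n), where each H_i is a nonzero polynomial whose lower degree d_i is at least 2. If F is a quasi-translation, i.e., X_i = F_i − H_i(F_1,…,F_n) for all 1 ≤ i ≤ n, then JH · H = 0, i.e., Σ_{j=1}^n (∂H_i/∂X_j)·H_j = 0 for all 1 ≤ i ≤ n. -/

import Mathlib

open MvPolynomial Finset

noncomputable def qtPhi {n : ℕ} (H : Fin n → MvPolynomial (Fin n) ℂ) :
    MvPolynomial (Fin n) ℂ →ₐ[ℂ] Polynomial (MvPolynomial (Fin n) ℂ) :=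
  aeval (fun j => Polynomial.C (X j) + Polynomial.X * Polynomial.C (H j))

lemma qtPhi_eval {n : ℕ} (H : Fin n → MvPolynomial (Fin n) ℂ) (k : ℕ)
    (p : MvPolynomial (Fin n) ℂ) :
    Polynomial.eval ((k : MvPolynomial (Fin n) ℂ)) (qtPhi H p)
      = aeval (fun j => X j + (k : MvPolynomial (Fin n) ℂ) * H j) p := by
  induction p using MvPolynomial.induction_on with
  | C c => simp [qtPhi]
  | add p q hp hq => simp [map_add, hp, hq]
  | mul_X p j hp =>
    rw [map_mul, Polynomial.eval_mul, hp, map_mul]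
    congr 1
    simp only [qtPhi, aeval_X, Polynomial.eval_add, Polynomial.eval_mul,
      Polynomial.eval_C, Polynomial.eval_X]

lemma qtPhi_coeff_zero {n : ℕ} (H : Fin n → MvPolynomial (Fin n) ℂ)
    (p : MvPolynomial (Fin n) ℂ) : (qtPhi H p).coeff 0 = p := by
  have h := qtPhi_eval H 0 p
  simpa [Polynomial.coeff_zero_eq_eval_zero] using h

lemma qtPhi_coeff_one {n : ℕ} (H : Fin n → MvPolynomial (Fin n) ℂ)
    (p : MvPolynomial (Fin n) ℂ) :
    (qtPhi H p).coeff 1 = ∑ j, pderiv j p * H j := by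
  induction p using MvPolynomial.induction_on with
  | C c => simp [qtPhi]
  | add p q hp hq => simp [map_add, hp, hq, Finset.sum_add_distrib, add_mul]
  | mul_X p j hp =>
    have : qtPhi H (p * X j)
        = qtPhi H p * Polynomial.C (X j)
          + qtPhi H p * Polynomial.X * Polynomial.C (H j) := by
      simp [qtPhi, map_mul]; ring
    rw [this]
    rw [Polynomial.coeff_add, Polynomial.coeff_mul_C, Polynomial.coeff_mul_C,
      Polynomial.coeff_mul_X, hp, qtPhi_coeff_zero]
    simp only [pderiv_mul, pderiv_X, add_mul, Finset.sum_add_distrib,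
      Finset.sum_mul]
    refine congrArg₂ (· + ·) ?_ ?_
    · exact Finset.sum_congr rfl fun k _ => by ring
    · rw [Finset.sum_eq_single j]
      · simp
      · intro k _ hk; simp [Pi.single_apply, hk]
      · simp

theorem stmt_15 {n : ℕ} (H : Fin n → MvPolynomial (Fin n) ℂ)
    (hHne : ∀ i, H i ≠ 0)
    (hH0 : ∀ i, homogeneousComponent 0 (H i) = 0)
    (hH1 : ∀ i, homogeneousComponent 1 (H i) = 0)
    (F : Fin n → MvPolynomial (Fin n) ℂ) (hF : ∀ i, F i = X i + H i)
    (hqt : ∀ i : Fin n, (X i : MvPolynomial (Fin n) ℂ) = F i - aeval F (H i)) :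
    ∀ i : Fin n, ∑ j : Fin n, pderiv j (H i) * H j = 0 := by
  -- H ∘ F = H
  have hcomp : ∀ i, aeval F (H i) = H i := by
    intro i
    have h := hqt i
    rw [hF i] at h
    linear_combination h
  -- H (X + k • H) = H for all naturals k
  have hk : ∀ k : ℕ, ∀ i,
      aeval (fun j => X j + (k : MvPolynomial (Fin n) ℂ) * H j) (H i) = H i := by
    intro k
    induction k with
    | zero => intro i; simp
    | succ k ih =>
      intro i
      have hfun : (fun j => X j + ((k + 1 : ℕ) : MvPolynomial (Fin n) ℂ) * H j)
          = fun j => aeval F (X j + (k : MvPolynomial (Fin n) ℂ) * H j) := by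
        funext j
        simp only [map_add, map_mul, map_natCast, aeval_X, hcomp, hF j]
        push_cast
        ring
      rw [hfun]
      have hc : aeval (fun j => aeval F (X j + (k : MvPolynomial (Fin n) ℂ) * H j)) (H i)
          = aeval F (aeval (fun j => X j + (k : MvPolynomial (Fin n) ℂ) * H j) (H i)) := by
        rw [← comp_aeval]
        rfl
      rw [hc, ih i, hcomp i]
  intro i
  -- the polynomial in t, qtPhi H (H i), is constant
  set q : Polynomial (MvPolynomial (Fin n) ℂ) :=
    qtPhi H (H i) - Polynomial.C (H i) with hq
  have hroot : ∀ k : ℕ, q.IsRoot ((k : MvPolynomial (Fin n) ℂ)) := by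
    intro k
    simp only [hq, Polynomial.IsRoot, Polynomial.eval_sub, Polynomial.eval_C,
      qtPhi_eval, hk k i, sub_self]
  have hinf : {x | q.IsRoot x}.Infinite :=
    Set.infinite_of_injective_forall_mem
      (f := fun k : ℕ => ((k : MvPolynomial (Fin n) ℂ))) Nat.cast_injective hroot
  have hq0 : q = 0 := Polynomial.eq_zero_of_infinite_isRoot q hinf
  have hconst : qtPhi H (H i) = Polynomial.C (H i) := by
    have := sub_eq_zero.mp hq0
    exact this
  have := qtPhi_coeff_one H (H i)
  rw [hconst] at this
  simpa using this.symm
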